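/- Let T > 1, let σ be a real number, and let z be a complex number with z ∉ (−∞, 0], where z^s denotes the principal branch and arg z ∈ (−π, π). Assume either (σ > 0 and |z| < 1) or (σ < 0 and |z| > 1). Then |z^s / sin(π s)| ≤ 4·e^{σ·log|z|}·e^{−T(π + arg z)} for s = σ + iT, and |z^s / sin(π s)| ≤ 4·e^{σ·log|z|}·e^{−T(π − arg z)} for s = σ − iT. -/

import Mathlib

open scoped Real

open Complex in
lemma sin_abs_lower (w : ℂ) (hw : 1 ≤ |w.im|) :
    Real.exp |w.im| / 4 ≤ ‖Complex.sin w‖ := by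
  have h2 : 2 * Complex.sin w = (Complex.exp (-w * I) - Complex.exp (w * I)) * I :=
    Complex.two_sin w
  have habs : ‖Complex.exp (-w * I) - Complex.exp (w * I)‖
      = 2 * ‖Complex.sin w‖ := by
    have := congrArg (‖·‖) h2
    simpa [norm_mul] using this.symm
  have h1 : ‖Complex.exp (-w * I)‖ = Real.exp w.im := by
    rw [Complex.norm_exp]; congr 1; simp
  have h2' : ‖Complex.exp (w * I)‖ = Real.exp (-w.im) := by
    rw [Complex.norm_exp]; congr 1; simp
  have key : Real.exp |w.im| - Real.exp (-|w.im|)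
      ≤ ‖Complex.exp (-w * I) - Complex.exp (w * I)‖ := by
    rcases abs_cases w.im with ⟨he, _⟩ | ⟨he, _⟩
    · calc Real.exp |w.im| - Real.exp (-|w.im|)
          = ‖Complex.exp (-w * I)‖ - ‖Complex.exp (w * I)‖ := by
            rw [h1, h2', he]
        _ ≤ _ := by
            simpa using
              norm_sub_norm_le (Complex.exp (-w * I)) (Complex.exp (w * I))
    · calc Real.exp |w.im| - Real.exp (-|w.im|)
          = ‖Complex.exp (w * I)‖ - ‖Complex.exp (-w * I)‖ := by
            rw [h1, h2', he]; ring_nf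
        _ ≤ _ := by
            have h3 : ‖Complex.exp (w * I) - Complex.exp (-w * I)‖
                = ‖Complex.exp (-w * I) - Complex.exp (w * I)‖ := by
              rw [← norm_neg]; ring_nf
            rw [← h3]
            simpa using
              norm_sub_norm_le (Complex.exp (w * I)) (Complex.exp (-w * I))
  have hsmall : Real.exp (-|w.im|) ≤ Real.exp |w.im| / 2 := by
    have h2e : (2:ℝ) ≤ Real.exp (2 * |w.im|) :=
      le_trans (by linarith) (Real.add_one_le_exp _)
    have : Real.exp (-|w.im|) = Real.exp |w.im| / Real.exp (2 * |w.im|) := by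
      rw [← Real.exp_sub]; ring_nf
    rw [this]
    exact div_le_div_of_nonneg_left (Real.exp_pos _).le two_pos h2e
  linarith [key.trans_eq habs]

theorem cpow_div_sin_bound (T : ℝ) (hT : 1 < T) (σ : ℝ) (z : ℂ)
    (hz : z ∈ Complex.slitPlane)
    (h : (0 < σ ∧ ‖z‖ < 1) ∨ (σ < 0 ∧ 1 < ‖z‖)) :
    ‖z ^ ((σ : ℂ) + Complex.I * T) / Complex.sin (π * ((σ : ℂ) + Complex.I * T))‖
        ≤ 4 * Real.exp (σ * Real.log ‖z‖) * Real.exp (-T * (π + z.arg)) ∧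
      ‖z ^ ((σ : ℂ) - Complex.I * T) / Complex.sin (π * ((σ : ℂ) - Complex.I * T))‖
        ≤ 4 * Real.exp (σ * Real.log ‖z‖) * Real.exp (-T * (π - z.arg)) := by
  have hz0 : z ≠ 0 := Complex.slitPlane_ne_zero hz
  have hzabs : 0 < ‖z‖ := norm_pos_iff.mpr hz0
  have hπ : (1:ℝ) < π := by linarith [Real.pi_gt_three]
  have hπT : 0 < π * T := by nlinarith
  have key : ∀ ε : ℝ, ε = 1 ∨ ε = -1 →
      ‖z ^ ((σ : ℂ) + ε * Complex.I * T) /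
          Complex.sin (π * ((σ : ℂ) + ε * Complex.I * T))‖
        ≤ 4 * Real.exp (σ * Real.log ‖z‖) * Real.exp (-T * (π + ε * z.arg)) := by
    intro ε hε
    set s : ℂ := (σ : ℂ) + ε * Complex.I * T with hs
    have hsre : s.re = σ := by simp [hs]
    have hsim : s.im = ε * T := by simp [hs]
    have hwim : ((π : ℂ) * s).im = π * (ε * T) := by simp [Complex.mul_im, hsim, hsre]
    have habsim : |((π : ℂ) * s).im| = π * T := by
      rw [hwim]
      rcases hε with rfl | rfl
      · rw [abs_of_pos (by nlinarith)]; ring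
      · rw [abs_of_neg (by nlinarith)]; ring
    have hB : Real.exp (π * T) / 4 ≤ ‖Complex.sin ((π : ℂ) * s)‖ := by
      have := sin_abs_lower ((π : ℂ) * s) (by rw [habsim]; nlinarith)
      rwa [habsim] at this
    have hA : ‖z ^ s‖
        = Real.exp (σ * Real.log ‖z‖) * Real.exp (-(T * (ε * z.arg))) := by
      rw [Complex.norm_cpow_of_ne_zero hz0, hsre, hsim, Real.rpow_def_of_pos hzabs,
        div_eq_mul_inv, ← Real.exp_neg, ← Real.exp_add, ← Real.exp_add]
      ring_nf
    rw [norm_div]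
    calc ‖z ^ s‖ / ‖Complex.sin ((π : ℂ) * s)‖
        ≤ (Real.exp (σ * Real.log ‖z‖) * Real.exp (-(T * (ε * z.arg))))
            / (Real.exp (π * T) / 4) :=
          div_le_div₀ (by positivity) (le_of_eq hA) (by positivity) hB
      _ = 4 * Real.exp (σ * Real.log ‖z‖) * Real.exp (-T * (π + ε * z.arg)) := by
          have he : Real.exp (-T * (π + ε * z.arg))
              = Real.exp (-(T * (ε * z.arg))) / Real.exp (π * T) := by
            rw [← Real.exp_sub]; ring_nf
          rw [he]
          field_simp
  constructor
  · have := key 1 (Or.inl rfl)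
    simpa using this
  · have := key (-1) (Or.inr rfl)
    have heq : (σ : ℂ) + (-1 : ℝ) * Complex.I * T = (σ : ℂ) - Complex.I * T := by
      push_cast; ring
    rw [heq] at this
    simpa [sub_eq_add_neg, neg_mul, mul_comm] using this
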